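/- Let σ > 0 and α, r ∈ ℝ with Δ := (σ²/2 − α)² + 2σ²r > 0, and let d₁ < d₂ be the roots of P(d) := (σ²/2)d² + (α − σ²/2)d − r. Let Π : (0,∞) → ℝ be Borel measurable and locally integrable, with x₁ₗ > 0 such that Π(x) < 0 for a.e. x ∈ (0, x₁ₗ) and Π(x) ≥ 0 for a.e. x ≥ x₁ₗ, and assume s ↦ s^{−d₂−1} Π⁺(s) is integrable on (w, ∞) and s ↦ s^{−d₁−1} Π⁺(s) is integrable on (0, w) for every w > 0. Suppose there exist ε > 0 and k > 0 with Π(x) ≤ −k for a.e. x ∈ (0, ε), and that either d₂ ≥ 0, or ∫_0^{x₁ₗ} s^{−d₁−1} Π⁻(s) ds = ∞. Then γ := inf{ x > 0 : ∃ C > x, ∫_x^C ((C/s)^{d₂} − (C/s)^{d₁}) · Π(s)/s ds ≥ 0 } is strictly positive. -/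

import Mathlib

open MeasureTheory Set
open scoped ENNReal

lemma meas_rpow_aux (e : ℝ) : Measurable fun s : ℝ => s ^ e := by measurability

lemma rpow_le_max_aux {u v t c : ℝ} (hu : 0 < u) (hut : u ≤ t) (htv : t ≤ v) :
    t ^ c ≤ max (u ^ c) (v ^ c) := by
  rcases le_or_gt c 0 with hc | hc
  · exact le_max_of_le_left (Real.rpow_le_rpow_of_nonpos hu hut hc)
  · exact le_max_of_le_right (Real.rpow_le_rpow (hu.le.trans hut) htv hc.le)

lemma integrable_weight_aux {Pf : ℝ → ℝ} (hloc : LocallyIntegrableOn Pf (Set.Ioi 0))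
    {F : ℝ → ℝ} (hFm : Measurable F) {a b K : ℝ} (ha : 0 < a)
    (hK : ∀ s ∈ Set.Icc a b, |F s| ≤ K * |Pf s|) :
    IntegrableOn F (Set.Icc a b) := by
  have hPf : IntegrableOn Pf (Set.Icc a b) :=
    hloc.integrableOn_compact_subset (fun s hs => lt_of_lt_of_le ha hs.1) isCompact_Icc
  refine Integrable.mono' (hPf.norm.const_mul K) hFm.aestronglyMeasurable ?_
  refine (ae_restrict_iff' measurableSet_Icc).2 (Filter.Eventually.of_forall fun s hs => ?_)
  simpa [Real.norm_eq_abs] using hK s hs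

/-- integrability of the kernel times Pf -/
lemma integrable_kernel_aux {Pf : ℝ → ℝ} (hPm : Measurable Pf)
    (hloc : LocallyIntegrableOn Pf (Set.Ioi 0)) (C d₁ d₂ a b : ℝ) (hC : 0 < C) (ha : 0 < a) :
    IntegrableOn (fun s => ((C / s) ^ d₂ - (C / s) ^ d₁) * Pf s / s) (Set.Icc a b) := by
  rcases le_or_gt a b with hab | hab
  · set K₂ : ℝ := max ((C / b) ^ d₂) ((C / a) ^ d₂) with hK₂
    set K₁ : ℝ := max ((C / b) ^ d₁) ((C / a) ^ d₁) with hK₁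
    refine integrable_weight_aux hloc ?_ ha (K := (K₂ + K₁) / a) ?_
    · have hm : ∀ d : ℝ, Measurable fun s : ℝ => (C / s) ^ d := fun d =>
        (meas_rpow_aux d).comp (measurable_const.div measurable_id)
      exact (((hm d₂).sub (hm d₁)).mul hPm).div measurable_id
    · intro s hs
      have hs0 : 0 < s := lt_of_lt_of_le ha hs.1
      have hb0 : 0 < b := lt_of_lt_of_le hs0 hs.2
      have ht0 : 0 < C / s := div_pos hC hs0
      have h1 : C / b ≤ C / s := div_le_div_of_nonneg_left hC.le hs0 hs.2
      have h2 : C / s ≤ C / a := div_le_div_of_nonneg_left hC.le ha hs.1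
      have hcb : 0 < C / b := div_pos hC hb0
      have hf2 : (C / s) ^ d₂ ≤ K₂ := rpow_le_max_aux hcb h1 h2
      have hf1 : (C / s) ^ d₁ ≤ K₁ := rpow_le_max_aux hcb h1 h2
      have habs : |(C / s) ^ d₂ - (C / s) ^ d₁| ≤ K₂ + K₁ := by
        rw [abs_sub_le_iff]
        constructor
        · have := Real.rpow_nonneg ht0.le d₁
          linarith
        · have := Real.rpow_nonneg ht0.le d₂
          linarith
      have : |((C / s) ^ d₂ - (C / s) ^ d₁) * Pf s / s|
          = |(C / s) ^ d₂ - (C / s) ^ d₁| * |Pf s| / s := by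
        rw [abs_div, abs_mul, abs_of_pos hs0]
      have hK20 : 0 ≤ K₂ := le_trans (Real.rpow_nonneg hcb.le _) (le_max_left _ _)
      have hK10 : 0 ≤ K₁ := le_trans (Real.rpow_nonneg hcb.le _) (le_max_left _ _)
      rw [this, div_mul_eq_mul_div]
      calc |(C / s) ^ d₂ - (C / s) ^ d₁| * |Pf s| / s
          ≤ (K₂ + K₁) * |Pf s| / s := by gcongr
        _ ≤ (K₂ + K₁) * |Pf s| / a :=
            div_le_div_of_nonneg_left (mul_nonneg (by linarith) (abs_nonneg _)) ha hs.1
  · simp [Set.Icc_eq_empty_of_lt hab, integrableOn_empty]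

lemma integrable_negpart_aux {Pf : ℝ → ℝ} (hPm : Measurable Pf)
    (hloc : LocallyIntegrableOn Pf (Set.Ioi 0)) (e a b : ℝ) (ha : 0 < a) :
    IntegrableOn (fun s => s ^ e * max (-Pf s) 0) (Set.Icc a b) := by
  refine integrable_weight_aux hloc
    ((meas_rpow_aux e).mul (hPm.neg.max measurable_const)) ha (K := max (a ^ e) (b ^ e)) ?_
  intro s hs
  have hs0 : 0 < s := lt_of_lt_of_le ha hs.1
  have h1 : s ^ e ≤ max (a ^ e) (b ^ e) := rpow_le_max_aux ha hs.1 hs.2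
  have h2 : max (-Pf s) 0 ≤ |Pf s| := by
    rcases le_total (-Pf s) 0 with h | h
    · simp [max_eq_right h]
    · rw [max_eq_left h, ← abs_neg]; exact le_abs_self _
  have h3 : |s ^ e * max (-Pf s) 0| = s ^ e * max (-Pf s) 0 := by
    exact abs_of_nonneg (mul_nonneg (Real.rpow_nonneg hs0.le e) (le_max_right _ _))
  change |s ^ e * max (-Pf s) 0| ≤ _
  rw [h3]
  exact mul_le_mul h1 h2 (le_max_right _ _) (le_trans (Real.rpow_nonneg ha.le e) (le_max_left _ _))

set_option maxHeartbeats 1000000 in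
theorem stmt_17 (σ α r : ℝ) (hσ : 0 < σ)
    (hΔ : 0 < (σ ^ 2 / 2 - α) ^ 2 + 2 * σ ^ 2 * r)
    (d₁ d₂ : ℝ)
    (hd₁ : d₁ = ((σ ^ 2 / 2 - α) - Real.sqrt ((σ ^ 2 / 2 - α) ^ 2 + 2 * σ ^ 2 * r)) / σ ^ 2)
    (hd₂ : d₂ = ((σ ^ 2 / 2 - α) + Real.sqrt ((σ ^ 2 / 2 - α) ^ 2 + 2 * σ ^ 2 * r)) / σ ^ 2)
    (Pf : ℝ → ℝ) (hPm : Measurable Pf)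
    (hloc : LocallyIntegrableOn Pf (Set.Ioi 0))
    (x₁ : ℝ) (hx₁ : 0 < x₁)
    (hneg : ∀ᵐ x ∂(volume.restrict (Set.Ioo 0 x₁)), Pf x < 0)
    (hpos : ∀ᵐ x ∂(volume.restrict (Set.Ici x₁)), 0 ≤ Pf x)
    (hintp₂ : ∀ w : ℝ, 0 < w →
      IntegrableOn (fun s : ℝ => s ^ (-d₂ - 1) * max (Pf s) 0) (Set.Ioi w))
    (hintp₁ : ∀ w : ℝ, 0 < w →
      IntegrableOn (fun s : ℝ => s ^ (-d₁ - 1) * max (Pf s) 0) (Set.Ioo 0 w))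
    (ε k : ℝ) (hε : 0 < ε) (hk : 0 < k)
    (hbelow : ∀ᵐ x ∂(volume.restrict (Set.Ioo 0 ε)), Pf x ≤ -k)
    (halt : 0 ≤ d₂ ∨
      ∫⁻ s in Set.Ioo (0 : ℝ) x₁,
        ENNReal.ofReal (s ^ (-d₁ - 1) * max (-Pf s) 0) = ⊤) :
    0 < sInf {x : ℝ | 0 < x ∧ ∃ C, x < C ∧
      0 ≤ ∫ s in x..C, ((C / s) ^ d₂ - (C / s) ^ d₁) * Pf s / s} := by
  have hσ2 : (0:ℝ) < σ ^ 2 := by positivity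
  have hd12 : d₁ < d₂ := by
    rw [hd₁, hd₂]
    have hs : 0 < Real.sqrt ((σ ^ 2 / 2 - α) ^ 2 + 2 * σ ^ 2 * r) := Real.sqrt_pos.2 hΔ
    have hs : 0 < Real.sqrt ((σ ^ 2 / 2 - α) ^ 2 + 2 * σ ^ 2 * r) := Real.sqrt_pos.2 hΔ
    apply div_lt_div_of_pos_right (by linarith) hσ2
  -- basic constants
  set m' : ℝ := min (min ε x₁) 1 / 2 with hm'def
  have hm'pos : 0 < m' := by positivity
  have h2m' : 2 * m' = min (min ε x₁) 1 := by rw [hm'def]; ring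
  have h2m'ε : 2 * m' ≤ ε := by rw [h2m']; exact le_trans (min_le_left _ _) (min_le_left _ _)
  have h2m'x₁ : 2 * m' ≤ x₁ := by rw [h2m']; exact le_trans (min_le_left _ _) (min_le_right _ _)
  have h2m'1 : 2 * m' ≤ 1 := by rw [h2m']; exact min_le_right _ _
  have hm'x₁ : m' < x₁ := by linarith
  have hm'ε : m' < ε := by linarith
  have hm'1 : m' < 1 := by linarith
  set c₀ : ℝ := 1 - (2:ℝ) ^ (d₁ - d₂) with hc₀def
  have hc₀ : 0 < c₀ := by
    have : (2:ℝ) ^ (d₁ - d₂) < 1 :=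
      Real.rpow_lt_one_of_one_lt_of_neg one_lt_two (by linarith)
    linarith
  set g : ℝ → ℝ := fun s => s ^ (-d₂ - 1) * max (-Pf s) 0 with hgdef
  have hgm : Measurable g := (meas_rpow_aux _).mul (hPm.neg.max measurable_const)
  have hgnn : ∀ s, 0 < s → 0 ≤ g s := fun s hs =>
    mul_nonneg (Real.rpow_nonneg hs.le _) (le_max_right _ _)
  set A : ℝ := ∫ s in Ioi m', s ^ (-d₂ - 1) * max (Pf s) 0 with hAdef
  have hA0 : 0 ≤ A := setIntegral_nonneg measurableSet_Ioi fun s hs =>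
    mul_nonneg (Real.rpow_nonneg (le_of_lt (lt_trans hm'pos hs)) _) (le_max_right _ _)
  set R : ℝ := A / c₀ with hRdef
  set M : ℝ → ℝ := fun x => ∫ s in Ioc x m', g s with hMdef
  have gInt : ∀ x : ℝ, 0 < x → IntegrableOn g (Ioc x m') := fun x hx =>
    (integrable_negpart_aux hPm hloc _ x m' hx).mono_set Ioc_subset_Icc_self
  -- divergence of the lintegral of g near 0
  have hdiv : ∫⁻ s in Ioo 0 m', ENNReal.ofReal (g s) = ⊤ := by
    rcases halt with hd2 | hT
    · -- case 0 ≤ d₂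
      have hnotint : ¬ IntegrableOn (fun s : ℝ => s ^ (-d₂ - 1)) (Ioo 0 m') := by
        rw [intervalIntegral.integrableOn_Ioo_rpow_iff hm'pos]
        push_neg
        linarith
      have h1 : ∫⁻ s in Ioo 0 m', ENNReal.ofReal (s ^ (-d₂ - 1)) = ⊤ := by
        by_contra hfin
        apply hnotint
        refine ⟨(meas_rpow_aux _).aestronglyMeasurable, ?_⟩
        rw [hasFiniteIntegral_iff_norm]
        have : ∫⁻ s in Ioo 0 m', ENNReal.ofReal ‖(s : ℝ) ^ (-d₂ - 1)‖
            = ∫⁻ s in Ioo 0 m', ENNReal.ofReal (s ^ (-d₂ - 1)) := by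
          refine setLIntegral_congr_fun measurableSet_Ioo
            (fun s hs => ?_)
          rw [Real.norm_eq_abs, abs_of_nonneg (Real.rpow_nonneg hs.1.le _)]
        rw [this]
        exact lt_top_iff_ne_top.2 hfin
      have h2 : ∫⁻ s in Ioo 0 m', ENNReal.ofReal (k * s ^ (-d₂ - 1))
          ≤ ∫⁻ s in Ioo 0 m', ENNReal.ofReal (g s) := by
        have hb' : ∀ᵐ s ∂(volume.restrict (Ioo 0 m')), Pf s ≤ -k :=
          ae_restrict_of_ae_restrict_of_subset
            (Ioo_subset_Ioo le_rfl hm'ε.le) hbelow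
        refine lintegral_mono_ae ?_
        filter_upwards [hb', ae_restrict_mem measurableSet_Ioo] with s hPfs hs
        refine ENNReal.ofReal_le_ofReal ?_
        have h3 : k ≤ max (-Pf s) 0 := le_max_of_le_left (by linarith)
        have h4 : 0 ≤ s ^ (-d₂ - 1) := Real.rpow_nonneg hs.1.le _
        calc k * s ^ (-d₂ - 1) ≤ max (-Pf s) 0 * s ^ (-d₂ - 1) :=
              mul_le_mul_of_nonneg_right h3 h4
          _ = g s := by rw [hgdef]; ring
      have h5 : ∫⁻ s in Ioo 0 m', ENNReal.ofReal (k * s ^ (-d₂ - 1)) = ⊤ := by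
        have : (fun s : ℝ => ENNReal.ofReal (k * s ^ (-d₂ - 1)))
            = fun s => ENNReal.ofReal k * ENNReal.ofReal (s ^ (-d₂ - 1)) := by
          funext s
          exact ENNReal.ofReal_mul hk.le
        rw [this, lintegral_const_mul _ (by
          exact (ENNReal.measurable_ofReal.comp (meas_rpow_aux _))), h1,
          ENNReal.mul_top]
        simpa using hk
      rw [h5] at h2
      exact top_le_iff.1 h2
    · -- case divergence of the d₁-integral
      set g₁ : ℝ → ℝ := fun s => s ^ (-d₁ - 1) * max (-Pf s) 0 with hg₁def
      have hg₁m : Measurable g₁ := (meas_rpow_aux _).mul (hPm.neg.max measurable_const)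
      have hsplit : Ioo (0:ℝ) x₁ = Ioo 0 m' ∪ Ico m' x₁ :=
        (Ioo_union_Ico_eq_Ioo hm'pos hm'x₁.le).symm
      have hdisj : Disjoint (Ioo (0:ℝ) m') (Ico m' x₁) := by
        refine Set.disjoint_left.2 fun s hs hs' => ?_
        exact absurd hs'.1 (not_le.2 hs.2)
      have hfin : ∫⁻ s in Ico m' x₁, ENNReal.ofReal (g₁ s) ≠ ⊤ := by
        have hint : IntegrableOn g₁ (Ico m' x₁) :=
          (integrable_negpart_aux hPm hloc _ m' x₁ hm'pos).mono_set Ico_subset_Icc_self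
        have := hint.hasFiniteIntegral
        rw [hasFiniteIntegral_iff_norm] at this
        refine ne_top_of_le_ne_top (lt_top_iff_ne_top.1 this) (lintegral_mono fun s => ?_)
        exact ENNReal.ofReal_le_ofReal (le_abs_self _)
      have hT' : ∫⁻ s in Ioo 0 m', ENNReal.ofReal (g₁ s) = ⊤ := by
        rw [hsplit, lintegral_union measurableSet_Ico hdisj] at hT
        by_contra hne'
        exact absurd hT (by
          simp only [ENNReal.add_eq_top, not_or]; exact ⟨hne', hfin⟩)
      have hmono2 : ∫⁻ s in Ioo 0 m', ENNReal.ofReal (g₁ s)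
          ≤ ∫⁻ s in Ioo 0 m', ENNReal.ofReal (g s) := by
        refine setLIntegral_mono (ENNReal.measurable_ofReal.comp hgm) fun s hs => ?_
        refine ENNReal.ofReal_le_ofReal ?_
        have h6 : s ^ (-d₁ - 1) ≤ s ^ (-d₂ - 1) :=
          Real.rpow_le_rpow_of_exponent_ge hs.1 (le_of_lt (lt_trans hs.2 hm'1))
            (by linarith)
        exact mul_le_mul_of_nonneg_right h6 (le_max_right _ _)
      rw [hT'] at hmono2
      exact top_le_iff.1 hmono2
  -- existence of threshold
  have hx₀ : ∃ x₀ ∈ Ioo (0:ℝ) m', R < M x₀ := by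
    by_contra hcon
    push_neg at hcon
    set G : ℝ → ℝ≥0∞ := fun s => ENNReal.ofReal (g s) with hGdef
    have hGm : Measurable G := ENNReal.measurable_ofReal.comp hgm
    have hxn : ∀ n : ℕ, m' / (n + 2) ∈ Ioo (0:ℝ) m' := by
      intro n
      constructor
      · positivity
      · refine div_lt_self hm'pos ?_
        have : (0:ℝ) ≤ n := Nat.cast_nonneg n
        linarith
    have hFm : ∀ n : ℕ, Measurable ((Ioc (m' / (n + 2)) m').indicator G) := fun n =>
      hGm.indicator measurableSet_Ioc
    have hmono : Monotone (fun (n : ℕ) => (Ioc (m' / (n + 2)) m').indicator G) := by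
      intro n j hnj
      refine Set.indicator_le_indicator_of_subset (Ioc_subset_Ioc_left ?_) (fun _ => zero_le ..)
      refine div_le_div_of_nonneg_left hm'pos.le (by positivity) ?_
      have : (n:ℝ) ≤ j := Nat.cast_le.2 hnj
      linarith
    have hsup : ∀ s, ⨆ n : ℕ, (Ioc (m' / (n + 2)) m').indicator G s
        = (Ioc (0:ℝ) m').indicator G s := by
      intro s
      by_cases hs : s ∈ Ioc (0:ℝ) m'
      · rw [indicator_of_mem hs]
        refine le_antisymm (iSup_le fun n => Set.indicator_le_self _ _ s) ?_
        obtain ⟨n, hn⟩ := exists_nat_gt (m' / s)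
        have hlt : m' / ((n:ℝ) + 2) < s := by
          refine (div_lt_iff₀ (by positivity)).2 ?_
          have h7 : m' / s < (n:ℝ) + 2 := by linarith
          calc m' = m' / s * s := (div_mul_cancel₀ _ hs.1.ne').symm
            _ < ((n:ℝ) + 2) * s := mul_lt_mul_of_pos_right h7 hs.1
            _ = s * ((n:ℝ) + 2) := by ring
        refine le_trans ?_ (le_iSup _ n)
        rw [indicator_of_mem (Set.mem_Ioc.mpr ⟨hlt, hs.2⟩)]
      · rw [indicator_of_notMem hs]
        refine le_antisymm (iSup_le fun n => ?_) (zero_le ..)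
        rw [indicator_of_notMem]
        intro hmem
        exact hs ⟨lt_trans (hxn n).1 hmem.1, hmem.2⟩
    have hle : ∫⁻ s in Ioc 0 m', G s ≤ ENNReal.ofReal R := by
      rw [← lintegral_indicator measurableSet_Ioc]
      have heq2 : (fun s => (Ioc (0:ℝ) m').indicator G s)
          = fun s => ⨆ n : ℕ, (Ioc (m' / (n + 2)) m').indicator G s := by
        funext s
        exact (hsup s).symm
      rw [heq2, lintegral_iSup hFm hmono]
      refine iSup_le fun n => ?_
      rw [lintegral_indicator measurableSet_Ioc]
      have hint := gInt _ (hxn n).1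
      have hnn : 0 ≤ᵐ[volume.restrict (Ioc (m' / (n + 2)) m')] g := by
        refine (ae_restrict_iff' measurableSet_Ioc).2
          (Filter.Eventually.of_forall fun s hs => hgnn s (lt_trans (hxn n).1 hs.1))
      have heq := ofReal_integral_eq_lintegral_ofReal hint hnn
      rw [hGdef, ← heq]
      exact ENNReal.ofReal_le_ofReal (hcon _ (hxn n))
    have h8 : (⊤ : ℝ≥0∞) ≤ ENNReal.ofReal R := by
      rw [← hdiv]
      exact le_trans (lintegral_mono_set Ioo_subset_Ioc_self) hle
    exact absurd (top_le_iff.1 h8) (by simp [ENNReal.ofReal_lt_top.ne])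
  obtain ⟨x₀, hx₀mem, hx₀R⟩ := hx₀
  -- key step: elements of the set below m' satisfy M x ≤ R
  have key : ∀ x ∈ Ioo (0:ℝ) m', ∀ C, x < C →
      0 ≤ (∫ s in x..C, ((C / s) ^ d₂ - (C / s) ^ d₁) * Pf s / s) → M x ≤ R := by
    intro x hx C hxC hI
    have hC0 : 0 < C := lt_trans hx.1 hxC
    rcases lt_or_ge C (2 * m') with hC2 | hC2
    · -- trivial case : C < 2 m', the integral is strictly negative, contradiction
      exfalso
      rw [intervalIntegral.integral_of_le hxC.le] at hI
      have hLint : IntegrableOn (fun s => ((C / s) ^ d₂ - (C / s) ^ d₁) * Pf s / s)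
          (Ioc x C) :=
        (integrable_kernel_aux hPm hloc C d₁ d₂ x C hC0 hx.1).mono_set Ioc_subset_Icc_self
      have hψc : ContinuousOn (fun s : ℝ => ((C / s) ^ d₂ - (C / s) ^ d₁) / s) (Icc x C) := by
        have hne0 : ∀ s ∈ Icc x C, s ≠ 0 := fun s hs => ne_of_gt (lt_of_lt_of_le hx.1 hs.1)
        have hdivc : ContinuousOn (fun s : ℝ => C / s) (Icc x C) :=
          continuousOn_const.div continuousOn_id hne0
        have hdne : ∀ s ∈ Icc x C, C / s ≠ 0 :=
          fun s hs => ne_of_gt (div_pos hC0 (lt_of_lt_of_le hx.1 hs.1))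
        exact ((hdivc.rpow_const fun s hs => Or.inl (hdne s hs)).sub
          (hdivc.rpow_const fun s hs => Or.inl (hdne s hs))).div continuousOn_id hne0
      have hφint : IntegrableOn
          (fun s : ℝ => -k * (((C / s) ^ d₂ - (C / s) ^ d₁) / s)) (Ioc x C) :=
        ((hψc.integrableOn_Icc).mono_set Ioc_subset_Icc_self).const_mul _
      have hmono : (∫ s in Ioc x C, ((C / s) ^ d₂ - (C / s) ^ d₁) * Pf s / s)
          ≤ ∫ s in Ioc x C, -k * (((C / s) ^ d₂ - (C / s) ^ d₁) / s) := by
        refine integral_mono_ae hLint hφint ?_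
        have hsub : Ioc x C ⊆ Ioo 0 ε := fun s hs =>
          ⟨lt_trans hx.1 hs.1, lt_of_le_of_lt hs.2 (lt_of_lt_of_le hC2 h2m'ε)⟩
        have hb' : ∀ᵐ s ∂(volume.restrict (Ioc x C)), Pf s ≤ -k :=
          ae_restrict_of_ae_restrict_of_subset hsub hbelow
        filter_upwards [hb', ae_restrict_mem measurableSet_Ioc] with s hPfs hs
        have hs0 : 0 < s := lt_trans hx.1 hs.1
        have ht1 : 1 ≤ C / s := (le_div_iff₀ hs0).2 (by linarith [hs.2])
        have hf0 : 0 ≤ (C / s) ^ d₂ - (C / s) ^ d₁ :=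
          sub_nonneg.2 (Real.rpow_le_rpow_of_exponent_le ht1 hd12.le)
        have e0 : -k * (((C / s) ^ d₂ - (C / s) ^ d₁) / s)
            = ((C / s) ^ d₂ - (C / s) ^ d₁) * (-k) / s := by ring
        rw [e0]
        exact (div_le_div_iff_of_pos_right hs0).2 (mul_le_mul_of_nonneg_left hPfs hf0)
      have hφval : (∫ s in Ioc x C, -k * (((C / s) ^ d₂ - (C / s) ^ d₁) / s)) < 0 := by
        rw [← intervalIntegral.integral_of_le hxC.le, intervalIntegral.integral_const_mul]
        have hpos' : 0 < ∫ s in x..C, ((C / s) ^ d₂ - (C / s) ^ d₁) / s := by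
          refine intervalIntegral.intervalIntegral_pos_of_pos_on ?_ ?_ hxC
          · refine ContinuousOn.intervalIntegrable ?_
            rwa [Set.uIcc_of_le hxC.le]
          · intro s hs
            have hs0 : 0 < s := lt_trans hx.1 hs.1
            have ht1 : 1 < C / s := (one_lt_div hs0).2 hs.2
            have : (C / s) ^ d₁ < (C / s) ^ d₂ :=
              Real.rpow_lt_rpow_of_exponent_lt ht1 hd12
            exact div_pos (by linarith) hs0
        exact mul_neg_of_neg_of_pos (by linarith) hpos'
      linarith
    · -- main case : 2 m' ≤ C
      have hm'C : m' < C := lt_of_lt_of_le (by linarith) hC2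
      have hint1 : IntervalIntegrable
          (fun s => ((C / s) ^ d₂ - (C / s) ^ d₁) * Pf s / s) volume x m' :=
        (intervalIntegrable_iff_integrableOn_Ioc_of_le hx.2.le).2
          ((integrable_kernel_aux hPm hloc C d₁ d₂ x m' hC0 hx.1).mono_set Ioc_subset_Icc_self)
      have hint2 : IntervalIntegrable
          (fun s => ((C / s) ^ d₂ - (C / s) ^ d₁) * Pf s / s) volume m' C :=
        (intervalIntegrable_iff_integrableOn_Ioc_of_le hm'C.le).2
          ((integrable_kernel_aux hPm hloc C d₁ d₂ m' C hC0 hm'pos).mono_set Ioc_subset_Icc_self)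
      have hsplit := intervalIntegral.integral_add_adjacent_intervals hint1 hint2
      -- Piece 1
      have hP1 : (∫ s in Ioc x m', ((C / s) ^ d₂ - (C / s) ^ d₁) * Pf s / s)
          ≤ -(c₀ * C ^ d₂) * M x := by
        have hRint : Integrable (fun s => -(c₀ * C ^ d₂) * g s)
            (volume.restrict (Ioc x m')) := (gInt x hx.1).const_mul _
        have hLint : IntegrableOn (fun s => ((C / s) ^ d₂ - (C / s) ^ d₁) * Pf s / s)
            (Ioc x m') :=
          (integrable_kernel_aux hPm hloc C d₁ d₂ x m' hC0 hx.1).mono_set Ioc_subset_Icc_self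
        have hmono : (∫ s in Ioc x m', ((C / s) ^ d₂ - (C / s) ^ d₁) * Pf s / s)
            ≤ ∫ s in Ioc x m', -(c₀ * C ^ d₂) * g s := by
          refine integral_mono_ae hLint hRint ?_
          have hsub : Ioc x m' ⊆ Ioo 0 x₁ := fun s hs =>
            ⟨lt_trans hx.1 hs.1, lt_of_le_of_lt hs.2 hm'x₁⟩
          have hneg' : ∀ᵐ s ∂(volume.restrict (Ioc x m')), Pf s < 0 :=
            ae_restrict_of_ae_restrict_of_subset hsub hneg
          filter_upwards [hneg', ae_restrict_mem measurableSet_Ioc] with s hPfs hs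
          have hs0 : 0 < s := lt_trans hx.1 hs.1
          have ht2 : 2 ≤ C / s := (le_div_iff₀ hs0).2 (by nlinarith [hs.2])
          have ht0 : (0:ℝ) < C / s := by linarith
          have hrnn : 0 ≤ (C / s) ^ d₂ := Real.rpow_nonneg ht0.le _
          have e4 : (C / s) ^ d₁ = (C / s) ^ d₂ * (C / s) ^ (d₁ - d₂) := by
            rw [← Real.rpow_add ht0]; ring_nf
          have e5 : (C / s) ^ (d₁ - d₂) ≤ (2:ℝ) ^ (d₁ - d₂) :=
            Real.rpow_le_rpow_of_nonpos two_pos ht2 (by linarith)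
          have hfge : c₀ * (C / s) ^ d₂ ≤ (C / s) ^ d₂ - (C / s) ^ d₁ := by
            have h9 : (C / s) ^ d₁ ≤ (C / s) ^ d₂ * (2:ℝ) ^ (d₁ - d₂) := by
              rw [e4]; exact mul_le_mul_of_nonneg_left e5 hrnn
            rw [hc₀def]; nlinarith
          have hsd : s ^ (-d₂ - 1) = s ^ (-d₂) * s⁻¹ := by
            rw [show -d₂ - 1 = -d₂ + (-1) by ring, Real.rpow_add hs0, Real.rpow_neg_one]
          have hcs : (C / s) ^ d₂ = C ^ d₂ * s ^ (-d₂) := by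
            rw [Real.div_rpow hC0.le hs0.le, Real.rpow_neg hs0.le, div_eq_mul_inv]
          have hid : c₀ * C ^ d₂ * s ^ (-d₂ - 1) = c₀ * ((C / s) ^ d₂) / s := by
            rw [hsd, hcs]; ring
          have hmax : max (-Pf s) 0 = -Pf s := max_eq_left (by linarith)
          have e6 : c₀ * ((C / s) ^ d₂) / s
              ≤ ((C / s) ^ d₂ - (C / s) ^ d₁) / s := (div_le_div_iff_of_pos_right hs0).2 hfge
          have e7 := mul_le_mul_of_nonpos_right e6 (le_of_lt hPfs)
          calc ((C / s) ^ d₂ - (C / s) ^ d₁) * Pf s / s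
              = ((C / s) ^ d₂ - (C / s) ^ d₁) / s * Pf s := by ring
            _ ≤ c₀ * ((C / s) ^ d₂) / s * Pf s := e7
            _ = -(c₀ * C ^ d₂) * g s := by
                simp only [hgdef, hmax]
                linear_combination (-(Pf s)) * hid
        have hconst : (∫ s in Ioc x m', -(c₀ * C ^ d₂) * g s)
            = -(c₀ * C ^ d₂) * M x := by
          rw [hMdef]
          exact integral_const_mul _ _
        exact hmono.trans (le_of_eq hconst)
      -- Piece 2
      have hP2 : (∫ s in Ioc m' C, ((C / s) ^ d₂ - (C / s) ^ d₁) * Pf s / s)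
          ≤ C ^ d₂ * A := by
        have hLint : IntegrableOn (fun s => ((C / s) ^ d₂ - (C / s) ^ d₁) * Pf s / s)
            (Ioc m' C) :=
          (integrable_kernel_aux hPm hloc C d₁ d₂ m' C hC0 hm'pos).mono_set Ioc_subset_Icc_self
        have hRint : IntegrableOn
            (fun s => C ^ d₂ * (s ^ (-d₂ - 1) * max (Pf s) 0)) (Ioc m' C) :=
          (((hintp₂ m' hm'pos).mono_set Ioc_subset_Ioi_self).const_mul _)
        have hstepa : (∫ s in Ioc m' C, ((C / s) ^ d₂ - (C / s) ^ d₁) * Pf s / s)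
            ≤ ∫ s in Ioc m' C, C ^ d₂ * (s ^ (-d₂ - 1) * max (Pf s) 0) := by
          refine setIntegral_mono_on hLint hRint measurableSet_Ioc ?_
          intro s hs
          have hs0 : 0 < s := lt_trans hm'pos hs.1
          have ht1 : 1 ≤ C / s := (le_div_iff₀ hs0).2 (by linarith [hs.2])
          have hf0 : 0 ≤ (C / s) ^ d₂ - (C / s) ^ d₁ :=
            sub_nonneg.2 (Real.rpow_le_rpow_of_exponent_le ht1 hd12.le)
          have hd1nn : 0 ≤ (C / s) ^ d₁ := Real.rpow_nonneg (by positivity) _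
          have hfle : (C / s) ^ d₂ - (C / s) ^ d₁ ≤ (C / s) ^ d₂ := by linarith
          have hsd : s ^ (-d₂ - 1) = s ^ (-d₂) * s⁻¹ := by
            rw [show -d₂ - 1 = -d₂ + (-1) by ring, Real.rpow_add hs0, Real.rpow_neg_one]
          have hcs : (C / s) ^ d₂ = C ^ d₂ * s ^ (-d₂) := by
            rw [Real.div_rpow hC0.le hs0.le, Real.rpow_neg hs0.le, div_eq_mul_inv]
          have hid2 : (C / s) ^ d₂ / s = C ^ d₂ * s ^ (-d₂ - 1) := by
            rw [hsd, hcs]; ring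
          calc ((C / s) ^ d₂ - (C / s) ^ d₁) * Pf s / s
              ≤ ((C / s) ^ d₂ - (C / s) ^ d₁) * max (Pf s) 0 / s :=
                (div_le_div_iff_of_pos_right hs0).2
                  (mul_le_mul_of_nonneg_left (le_max_left _ _) hf0)
            _ ≤ (C / s) ^ d₂ * max (Pf s) 0 / s :=
                (div_le_div_iff_of_pos_right hs0).2
                  (mul_le_mul_of_nonneg_right hfle (le_max_right _ _))
            _ = C ^ d₂ * (s ^ (-d₂ - 1) * max (Pf s) 0) := by
                linear_combination (max (Pf s) 0) * hid2
        have hstepb : (∫ s in Ioc m' C, C ^ d₂ * (s ^ (-d₂ - 1) * max (Pf s) 0))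
            ≤ C ^ d₂ * A := by
          rw [integral_const_mul]
          refine mul_le_mul_of_nonneg_left ?_ (Real.rpow_nonneg hC0.le _)
          rw [hAdef]
          refine setIntegral_mono_set (hintp₂ m' hm'pos) ?_
            (HasSubset.Subset.eventuallyLE Ioc_subset_Ioi_self)
          filter_upwards [ae_restrict_mem measurableSet_Ioi] with s hs
          exact mul_nonneg (Real.rpow_nonneg (le_of_lt (lt_trans hm'pos hs)) _)
            (le_max_right _ _)
        linarith
      -- combine
      have e8 : (∫ s in x..m', ((C / s) ^ d₂ - (C / s) ^ d₁) * Pf s / s)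
          = ∫ s in Ioc x m', ((C / s) ^ d₂ - (C / s) ^ d₁) * Pf s / s :=
        intervalIntegral.integral_of_le hx.2.le
      have e9 : (∫ s in m'..C, ((C / s) ^ d₂ - (C / s) ^ d₁) * Pf s / s)
          = ∫ s in Ioc m' C, ((C / s) ^ d₂ - (C / s) ^ d₁) * Pf s / s :=
        intervalIntegral.integral_of_le hm'C.le
      have hCd : 0 < C ^ d₂ := Real.rpow_pos_of_pos hC0 _
      have hsum : 0 ≤ -(c₀ * C ^ d₂) * M x + C ^ d₂ * A := by
        rw [← hsplit, e8, e9] at hI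
        exact hI.trans (add_le_add hP1 hP2)
      have h11 : C ^ d₂ * (c₀ * M x) ≤ C ^ d₂ * A := by nlinarith [hsum]
      have h12 : c₀ * M x ≤ A := le_of_mul_le_mul_left h11 hCd
      rw [hRdef]
      exact (le_div_iff₀ hc₀).2 (by linarith)
  -- nonemptiness
  have hne : (Set.Nonempty {x : ℝ | 0 < x ∧ ∃ C, x < C ∧
      0 ≤ ∫ s in x..C, ((C / s) ^ d₂ - (C / s) ^ d₁) * Pf s / s}) := by
    refine ⟨x₁, hx₁, x₁ + 1, lt_add_one _, ?_⟩
    rw [intervalIntegral.integral_of_le (le_of_lt (lt_add_one _))]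
    refine setIntegral_nonneg_of_ae_restrict ?_
    have hp' : ∀ᵐ s ∂(volume.restrict (Ioc x₁ (x₁ + 1))), 0 ≤ Pf s :=
      ae_restrict_of_ae_restrict_of_subset (fun s hs => le_of_lt hs.1) hpos
    filter_upwards [hp', ae_restrict_mem measurableSet_Ioc] with s hPfs hs
    have hs0 : 0 < s := lt_trans hx₁ hs.1
    have ht1 : 1 ≤ (x₁ + 1) / s := (le_div_iff₀ hs0).2 (by linarith [hs.2])
    have hf0 : 0 ≤ ((x₁ + 1) / s) ^ d₂ - ((x₁ + 1) / s) ^ d₁ :=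
      sub_nonneg.2 (Real.rpow_le_rpow_of_exponent_le ht1 hd12.le)
    positivity
  refine lt_of_lt_of_le hx₀mem.1 (le_csInf hne ?_)
  rintro y ⟨hy0, C, hyC, hyI⟩
  by_contra hlt
  push_neg at hlt
  have hym : y ∈ Ioo (0:ℝ) m' := ⟨hy0, hlt.trans hx₀mem.2⟩
  have hMy : M y ≤ R := key y hym C hyC hyI
  have hMmono : M x₀ ≤ M y := by
    refine setIntegral_mono_set (gInt y hy0) ?_ ?_
    · refine (ae_restrict_iff' measurableSet_Ioc).2 (Filter.Eventually.of_forall fun s hs => ?_)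
      exact hgnn s (lt_trans hy0 hs.1)
    · exact HasSubset.Subset.eventuallyLE (Ioc_subset_Ioc_left hlt.le)
  linarith
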